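/- The subgroup G of ℍˣ generated by the two spinors a₁a₂ and a₂a₃ has exactly 120 elements (it is the binary icosahedral group 2I, the double cover of the chiral icosahedral rotation group of order 60). -/

import Mathlib

noncomputable section

open Quaternion

/-- The golden ratio `τ = (1+√5)/2`. -/
def τ : ℝ := (1 + Real.sqrt 5) / 2

/-- The simple root `a₁ = j` of `H₃`, as a pure unit quaternion. -/
def a₁ : ℍ[ℝ] := ⟨0, 0, 1, 0⟩

/-- The simple root `a₂ = -½((τ-1)i + j + τk)` of `H₃`, as a pure unit quaternion. -/
def a₂ : ℍ[ℝ] := ⟨0, -((τ - 1) / 2), -(1 / 2), -(τ / 2)⟩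

/-- The simple root `a₃ = k` of `H₃`, as a pure unit quaternion. -/
def a₃ : ℍ[ℝ] := ⟨0, 0, 0, 1⟩

/-- The subgroup of `ℍˣ` generated by the two spinors `a₁a₂` and `a₂a₃`
(the binary icosahedral group `2I`). -/
def G2I : Subgroup (ℍ[ℝ])ˣ :=
  Subgroup.closure {u : (ℍ[ℝ])ˣ | (u : ℍ[ℝ]) = a₁ * a₂ ∨ (u : ℍ[ℝ]) = a₂ * a₃}

structure Q where
  a1 : ℤ
  a2 : ℤ
  b1 : ℤ
  b2 : ℤ
  c1 : ℤ
  c2 : ℤ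
  d1 : ℤ
  d2 : ℤ
deriving DecidableEq, Inhabited

def rawmul (p q : Q) : Q :=
  ⟨p.a1*q.a1+5*p.a2*q.a2 - (p.b1*q.b1+5*p.b2*q.b2) - (p.c1*q.c1+5*p.c2*q.c2) - (p.d1*q.d1+5*p.d2*q.d2),
   p.a1*q.a2+p.a2*q.a1 - (p.b1*q.b2+p.b2*q.b1) - (p.c1*q.c2+p.c2*q.c1) - (p.d1*q.d2+p.d2*q.d1),
   p.a1*q.b1+5*p.a2*q.b2 + (p.b1*q.a1+5*p.b2*q.a2) + (p.c1*q.d1+5*p.c2*q.d2) - (p.d1*q.c1+5*p.d2*q.c2),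
   p.a1*q.b2+p.a2*q.b1 + (p.b1*q.a2+p.b2*q.a1) + (p.c1*q.d2+p.c2*q.d1) - (p.d1*q.c2+p.d2*q.c1),
   p.a1*q.c1+5*p.a2*q.c2 - (p.b1*q.d1+5*p.b2*q.d2) + (p.c1*q.a1+5*p.c2*q.a2) + (p.d1*q.b1+5*p.d2*q.b2),
   p.a1*q.c2+p.a2*q.c1 - (p.b1*q.d2+p.b2*q.d1) + (p.c1*q.a2+p.c2*q.a1) + (p.d1*q.b2+p.d2*q.b1),
   p.a1*q.d1+5*p.a2*q.d2 + (p.b1*q.c1+5*p.b2*q.c2) - (p.c1*q.b1+5*p.c2*q.b2) + (p.d1*q.a1+5*p.d2*q.a2),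
   p.a1*q.d2+p.a2*q.d1 + (p.b1*q.c2+p.b2*q.c1) - (p.c1*q.b2+p.c2*q.b1) + (p.d1*q.a2+p.d2*q.a1)⟩

def scale4 (p : Q) : Q := ⟨4*p.a1, 4*p.a2, 4*p.b1, 4*p.b2, 4*p.c1, 4*p.c2, 4*p.d1, 4*p.d2⟩

def qconj (p : Q) : Q := ⟨p.a1, p.a2, -p.b1, -p.b2, -p.c1, -p.c2, -p.d1, -p.d2⟩

def qone : Q := ⟨4,0,0,0,0,0,0,0⟩
def qx : Q := ⟨2,0,-1,-1,0,0,-1,1⟩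
def qy : Q := ⟨1,1,-2,0,-1,1,0,0⟩
def W : List (Q × ℕ × ℕ) := [
  (Q.mk 4 0 0 0 0 0 0 0, 0, 0),
  (Q.mk 2 0 (-1) (-1) 0 0 (-1) 1, 0, 0),
  (Q.mk 1 1 (-2) 0 (-1) 1 0 0, 0, 0),
  (Q.mk (-2) 0 (-1) (-1) 0 0 (-1) 1, 1, 1),
  (Q.mk 0 0 (-4) 0 0 0 0 0, 1, 2),
  (Q.mk 0 0 (-1) (-1) (-1) 1 2 0, 2, 1),
  (Q.mk (-1) 1 (-1) (-1) 2 0 0 0, 2, 2),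
  (Q.mk (-4) 0 0 0 0 0 0 0, 3, 1),
  (Q.mk (-1) (-1) (-2) 0 1 (-1) 0 0, 3, 2),
  (Q.mk (-1) (-1) (-2) 0 (-1) 1 0 0, 4, 1),
  (Q.mk (-2) 0 (-1) (-1) 0 0 1 (-1), 4, 2),
  (Q.mk (-1) (-1) 1 (-1) 0 0 2 0, 5, 1),
  (Q.mk (-2) 0 (-2) 0 2 0 2 0, 6, 1),
  (Q.mk 1 (-1) (-1) (-1) 2 0 0 0, 6, 2),
  (Q.mk (-2) 0 1 1 0 0 1 (-1), 7, 1),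
  (Q.mk (-1) (-1) 2 0 1 (-1) 0 0, 7, 2),
  (Q.mk (-1) (-1) (-1) 1 0 0 (-2) 0, 8, 1),
  (Q.mk (-1) (-1) 0 0 (-2) 0 1 (-1), 8, 2),
  (Q.mk (-1) (-1) 2 0 (-1) 1 0 0, 9, 1),
  (Q.mk (-1) (-1) 0 0 2 0 1 (-1), 10, 1),
  (Q.mk (-1) (-1) 1 (-1) 0 0 (-2) 0, 10, 2),
  (Q.mk (-1) (-1) 0 0 (-2) 0 (-1) 1, 11, 2),
  (Q.mk (-1) (-1) (-1) 1 0 0 2 0, 12, 1),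
  (Q.mk (-1) (-1) 0 0 2 0 (-1) 1, 13, 1),
  (Q.mk 2 0 1 1 0 0 1 (-1), 14, 1),
  (Q.mk 0 0 4 0 0 0 0 0, 14, 2),
  (Q.mk 0 0 1 1 1 (-1) (-2) 0, 15, 1),
  (Q.mk 1 (-1) 1 1 (-2) 0 0 0, 15, 2),
  (Q.mk 0 0 1 1 (-1) 1 (-2) 0, 16, 1),
  (Q.mk 1 (-1) 2 0 0 0 (-1) (-1), 17, 1),
  (Q.mk (-2) 0 2 0 (-2) 0 (-2) 0, 17, 2),
  (Q.mk (-2) 0 1 1 0 0 (-1) 1, 18, 2),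
  (Q.mk 1 (-1) 1 1 2 0 0 0, 19, 1),
  (Q.mk (-2) 0 2 0 2 0 (-2) 0, 20, 1),
  (Q.mk (-2) 0 (-1) 1 (-1) (-1) 0 0, 21, 2),
  (Q.mk (-2) 0 2 0 (-2) 0 2 0, 22, 2),
  (Q.mk 1 1 2 0 (-1) 1 0 0, 24, 2),
  (Q.mk 1 1 2 0 1 (-1) 0 0, 25, 1),
  (Q.mk 2 0 1 1 0 0 (-1) 1, 25, 2),
  (Q.mk 1 1 (-1) 1 0 0 (-2) 0, 26, 1),
  (Q.mk 2 0 2 0 (-2) 0 (-2) 0, 27, 1),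
  (Q.mk (-1) 1 1 1 (-2) 0 0 0, 27, 2),
  (Q.mk (-1) 1 1 1 2 0 0 0, 28, 2),
  (Q.mk 2 0 2 0 2 0 (-2) 0, 29, 1),
  (Q.mk (-1) 1 2 0 0 0 (-1) (-1), 30, 1),
  (Q.mk 0 0 1 1 1 (-1) 2 0, 31, 2),
  (Q.mk 0 0 1 1 (-1) 1 2 0, 32, 2),
  (Q.mk 0 0 (-1) 1 (-2) 0 (-1) (-1), 34, 1),
  (Q.mk 0 0 2 0 (-1) (-1) 1 (-1), 34, 2),
  (Q.mk 0 0 2 0 (-1) (-1) (-1) 1, 35, 2),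
  (Q.mk 1 1 1 (-1) 0 0 2 0, 36, 1),
  (Q.mk 1 1 0 0 2 0 (-1) 1, 36, 2),
  (Q.mk 1 1 (-2) 0 1 (-1) 0 0, 37, 1),
  (Q.mk 1 1 0 0 (-2) 0 (-1) 1, 38, 1),
  (Q.mk 1 1 (-1) 1 0 0 2 0, 38, 2),
  (Q.mk 1 1 0 0 2 0 1 (-1), 39, 2),
  (Q.mk 1 1 1 (-1) 0 0 (-2) 0, 40, 1),
  (Q.mk 1 1 0 0 (-2) 0 1 (-1), 41, 1),
  (Q.mk 2 0 2 0 2 0 2 0, 42, 2),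
  (Q.mk 2 0 (-1) 1 1 1 0 0, 43, 2),
  (Q.mk 2 0 (-1) 1 (-1) (-1) 0 0, 45, 1),
  (Q.mk 2 0 2 0 (-2) 0 2 0, 45, 2),
  (Q.mk (-1) 1 2 0 0 0 1 1, 46, 2),
  (Q.mk 2 0 0 0 (-1) 1 (-1) (-1), 47, 1),
  (Q.mk 2 0 0 0 1 (-1) (-1) (-1), 48, 1),
  (Q.mk (-1) 1 0 0 (-1) (-1) (-2) 0, 49, 1),
  (Q.mk 0 0 (-1) (-1) 1 (-1) 2 0, 50, 1),
  (Q.mk (-1) 1 (-2) 0 0 0 1 1, 51, 1),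
  (Q.mk 2 0 (-2) 0 2 0 2 0, 51, 2),
  (Q.mk 2 0 (-1) (-1) 0 0 1 (-1), 52, 2),
  (Q.mk (-1) 1 (-1) (-1) (-2) 0 0 0, 53, 1),
  (Q.mk 2 0 (-2) 0 (-2) 0 2 0, 54, 1),
  (Q.mk 2 0 1 (-1) 1 1 0 0, 55, 2),
  (Q.mk 2 0 (-2) 0 2 0 (-2) 0, 56, 2),
  (Q.mk 2 0 0 0 1 (-1) 1 1, 58, 1),
  (Q.mk 2 0 0 0 (-1) 1 1 1, 58, 2),
  (Q.mk (-1) 1 0 0 1 1 2 0, 59, 2),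
  (Q.mk 2 0 (-2) 0 (-2) 0 (-2) 0, 60, 1),
  (Q.mk 2 0 1 (-1) (-1) (-1) 0 0, 61, 1),
  (Q.mk (-1) 1 0 0 (-1) (-1) 2 0, 62, 1),
  (Q.mk (-1) 1 0 0 1 1 (-2) 0, 63, 2),
  (Q.mk (-1) 1 (-2) 0 0 0 (-1) (-1), 65, 1),
  (Q.mk 1 (-1) (-1) (-1) (-2) 0 0 0, 66, 2),
  (Q.mk (-2) 0 (-2) 0 (-2) 0 2 0, 67, 1),
  (Q.mk 1 (-1) (-2) 0 0 0 1 1, 68, 1),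
  (Q.mk 0 0 (-1) (-1) (-1) 1 (-2) 0, 69, 2),
  (Q.mk 0 0 (-1) (-1) 1 (-1) (-2) 0, 70, 2),
  (Q.mk 0 0 1 (-1) 2 0 1 1, 72, 1),
  (Q.mk 0 0 (-2) 0 1 1 (-1) 1, 72, 2),
  (Q.mk 0 0 (-2) 0 1 1 1 (-1), 73, 2),
  (Q.mk 0 0 (-2) 0 (-1) (-1) (-1) 1, 74, 1),
  (Q.mk 0 0 1 (-1) (-2) 0 1 1, 75, 1),
  (Q.mk 0 0 0 0 0 0 4 0, 76, 1),
  (Q.mk 0 0 (-2) 0 (-1) (-1) 1 (-1), 79, 1),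
  (Q.mk 0 0 0 0 4 0 0 0, 80, 2),
  (Q.mk 0 0 1 (-1) 2 0 (-1) (-1), 81, 2),
  (Q.mk (-2) 0 (-2) 0 (-2) 0 (-2) 0, 82, 2),
  (Q.mk (-2) 0 1 (-1) (-1) (-1) 0 0, 83, 2),
  (Q.mk (-2) 0 1 (-1) 1 1 0 0, 85, 1),
  (Q.mk (-2) 0 (-2) 0 2 0 (-2) 0, 85, 2),
  (Q.mk 1 (-1) (-2) 0 0 0 (-1) (-1), 86, 2),
  (Q.mk (-2) 0 0 0 1 (-1) 1 1, 87, 1),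
  (Q.mk (-2) 0 0 0 (-1) 1 1 1, 88, 1),
  (Q.mk 1 (-1) 0 0 1 1 2 0, 89, 1),
  (Q.mk 1 (-1) 0 0 (-1) (-1) 2 0, 92, 1),
  (Q.mk 0 0 1 (-1) (-2) 0 (-1) (-1), 93, 2),
  (Q.mk 0 0 (-1) 1 2 0 1 1, 94, 1),
  (Q.mk 1 (-1) 0 0 1 1 (-2) 0, 95, 2),
  (Q.mk (-2) 0 0 0 (-1) 1 (-1) (-1), 96, 1),
  (Q.mk (-2) 0 0 0 1 (-1) (-1) (-1), 96, 2),
  (Q.mk 1 (-1) 0 0 (-1) (-1) (-2) 0, 97, 2),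
  (Q.mk (-2) 0 2 0 2 0 2 0, 98, 1),
  (Q.mk (-2) 0 (-1) 1 1 1 0 0, 99, 1),
  (Q.mk 1 (-1) 2 0 0 0 1 1, 103, 1),
  (Q.mk 0 0 0 0 (-4) 0 0 0, 104, 2),
  (Q.mk 0 0 0 0 0 0 (-4) 0, 105, 2),
  (Q.mk 0 0 (-1) 1 (-2) 0 1 1, 106, 1),
  (Q.mk 0 0 2 0 1 1 (-1) 1, 107, 1),
  (Q.mk 0 0 2 0 1 1 1 (-1), 108, 1),
  (⟨0, 0, -1, 1, 2, 0, -1, -1⟩, 109, 1)]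
def nth (i : ℕ) : Q := (W.getD i default).1
def pj (i : ℕ) : ℕ := (W.getD i default).2.1
def pk (i : ℕ) : ℕ := (W.getD i default).2.2
def L : List Q := (List.range 120).map nth

set_option maxHeartbeats 2000000 in
theorem hok : ∀ i < 120, (nth i = qone ∨ nth i = qx ∨ nth i = qy) ∨
    (pj i < i ∧ pk i < i ∧ rawmul (nth (pj i)) (nth (pk i)) = scale4 (nth i)) := by decide

set_option maxHeartbeats 4000000 in
set_option maxRecDepth 40000 in
theorem hclosure : ∀ p ∈ L, ∀ g ∈ [qx, qy, qconj qx, qconj qy],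
    ∃ c ∈ L, rawmul p g = scale4 c := by decide

set_option maxHeartbeats 4000000 in
set_option maxRecDepth 40000 in
theorem hnodup : L.Nodup := by decide

def ev (u v : ℤ) : ℝ := (u + v * Real.sqrt 5) / 4

def ψ (p : Q) : ℍ[ℝ] := ⟨ev p.a1 p.a2, ev p.b1 p.b2, ev p.c1 p.c2, ev p.d1 p.d2⟩

theorem s5 : Real.sqrt 5 * Real.sqrt 5 = 5 := Real.mul_self_sqrt (by norm_num)

theorem psi_mul {p q c : Q} (h : rawmul p q = scale4 c) : ψ c = ψ p * ψ q := by
  have h1 := congrArg (fun z => ((Q.a1 z : ℤ) : ℝ)) h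
  have h2 := congrArg (fun z => ((Q.a2 z : ℤ) : ℝ)) h
  have h3 := congrArg (fun z => ((Q.b1 z : ℤ) : ℝ)) h
  have h4 := congrArg (fun z => ((Q.b2 z : ℤ) : ℝ)) h
  have h5 := congrArg (fun z => ((Q.c1 z : ℤ) : ℝ)) h
  have h6 := congrArg (fun z => ((Q.c2 z : ℤ) : ℝ)) h
  have h7 := congrArg (fun z => ((Q.d1 z : ℤ) : ℝ)) h
  have h8 := congrArg (fun z => ((Q.d2 z : ℤ) : ℝ)) h
  simp only [rawmul, scale4] at h1 h2 h3 h4 h5 h6 h7 h8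
  push_cast at h1 h2 h3 h4 h5 h6 h7 h8
  ext
  · show ev c.a1 c.a2 = (ψ p * ψ q).re
    rw [Quaternion.re_mul]
    show ev c.a1 c.a2 = ev p.a1 p.a2 * ev q.a1 q.a2 - ev p.b1 p.b2 * ev q.b1 q.b2
      - ev p.c1 p.c2 * ev q.c1 q.c2 - ev p.d1 p.d2 * ev q.d1 q.d2
    unfold ev
    linear_combination (-h1 - Real.sqrt 5 * h2
      - ((p.a2:ℝ)*q.a2 - p.b2*q.b2 - p.c2*q.c2 - p.d2*q.d2) * s5)/16
  · show ev c.b1 c.b2 = (ψ p * ψ q).imI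
    rw [Quaternion.imI_mul]
    show ev c.b1 c.b2 = ev p.a1 p.a2 * ev q.b1 q.b2 + ev p.b1 p.b2 * ev q.a1 q.a2
      + ev p.c1 p.c2 * ev q.d1 q.d2 - ev p.d1 p.d2 * ev q.c1 q.c2
    unfold ev
    linear_combination (-h3 - Real.sqrt 5 * h4
      - ((p.a2:ℝ)*q.b2 + p.b2*q.a2 + p.c2*q.d2 - p.d2*q.c2) * s5)/16
  · show ev c.c1 c.c2 = (ψ p * ψ q).imJ
    rw [Quaternion.imJ_mul]
    show ev c.c1 c.c2 = ev p.a1 p.a2 * ev q.c1 q.c2 - ev p.b1 p.b2 * ev q.d1 q.d2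
      + ev p.c1 p.c2 * ev q.a1 q.a2 + ev p.d1 p.d2 * ev q.b1 q.b2
    unfold ev
    linear_combination (-h5 - Real.sqrt 5 * h6
      - ((p.a2:ℝ)*q.c2 - p.b2*q.d2 + p.c2*q.a2 + p.d2*q.b2) * s5)/16
  · show ev c.d1 c.d2 = (ψ p * ψ q).imK
    rw [Quaternion.imK_mul]
    show ev c.d1 c.d2 = ev p.a1 p.a2 * ev q.d1 q.d2 + ev p.b1 p.b2 * ev q.c1 q.c2
      - ev p.c1 p.c2 * ev q.b1 q.b2 + ev p.d1 p.d2 * ev q.a1 q.a2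
    unfold ev
    linear_combination (-h7 - Real.sqrt 5 * h8
      - ((p.a2:ℝ)*q.d2 + p.b2*q.c2 - p.c2*q.b2 + p.d2*q.a2) * s5)/16

theorem psi_one : ψ qone = 1 := by
  ext <;> simp [ψ, ev, qone, Quaternion.re_one]  <;> norm_num

theorem psi_x : ψ qx = a₁ * a₂ := by
  have h5 := s5
  ext
  · show ev 2 0 = (a₁ * a₂).re
    rw [Quaternion.re_mul]
    show ev 2 0 = (0:ℝ) * 0 - 0 * (-((τ - 1) / 2)) - 1 * (-(1/2)) - 0 * (-(τ/2))
    unfold ev τ; push_cast; ring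
  · show ev (-1) (-1) = (a₁ * a₂).imI
    rw [Quaternion.imI_mul]
    show ev (-1) (-1) = (0:ℝ) * (-((τ - 1) / 2)) + 0 * 0 + 1 * (-(τ/2)) - 0 * (-(1/2))
    unfold ev τ; push_cast; ring
  · show ev 0 0 = (a₁ * a₂).imJ
    rw [Quaternion.imJ_mul]
    show ev 0 0 = (0:ℝ) * (-(1/2)) - 0 * (-(τ/2)) + 1 * 0 + 0 * (-((τ - 1) / 2))
    unfold ev; push_cast; ring
  · show ev (-1) 1 = (a₁ * a₂).imK
    rw [Quaternion.imK_mul]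
    show ev (-1) 1 = (0:ℝ) * (-(τ/2)) + 0 * (-(1/2)) - 1 * (-((τ - 1) / 2)) + 0 * 0
    unfold ev τ; push_cast; ring

theorem psi_y : ψ qy = a₂ * a₃ := by
  ext
  · show ev 1 1 = (a₂ * a₃).re
    rw [Quaternion.re_mul]
    show ev 1 1 = (0:ℝ) * 0 - (-((τ - 1) / 2)) * 0 - (-(1/2)) * 0 - (-(τ/2)) * 1
    unfold ev τ; push_cast; ring
  · show ev (-2) 0 = (a₂ * a₃).imI
    rw [Quaternion.imI_mul]
    show ev (-2) 0 = (0:ℝ) * 0 + (-((τ - 1) / 2)) * 0 + (-(1/2)) * 1 - (-(τ/2)) * 0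
    unfold ev; push_cast; ring
  · show ev (-1) 1 = (a₂ * a₃).imJ
    rw [Quaternion.imJ_mul]
    show ev (-1) 1 = (0:ℝ) * 0 - (-((τ - 1) / 2)) * 1 + (-(1/2)) * 0 + (-(τ/2)) * 0
    unfold ev τ; push_cast; ring
  · show ev 0 0 = (a₂ * a₃).imK
    rw [Quaternion.imK_mul]
    show ev 0 0 = (0:ℝ) * 1 + (-((τ - 1) / 2)) * 0 - (-(1/2)) * 0 + (-(τ/2)) * 0
    unfold ev; push_cast; ring

theorem irr5 : Irrational (Real.sqrt 5) := by
  have : Nat.Prime 5 := by norm_num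
  exact this.irrational_sqrt

theorem ev_inj {u v u' v' : ℤ} (h : ev u v = ev u' v') : u = u' ∧ v = v' := by
  unfold ev at h
  have hv : v = v' := by
    by_contra hv
    apply irr5
    refine ⟨((u - u' : ℤ) : ℚ) / ((v' - v : ℤ) : ℚ), ?_⟩
    have hvv : ((v' : ℝ) - v) ≠ 0 := by
      intro h0
      apply hv
      have : (v:ℝ) = (v':ℝ) := by linarith
      exact_mod_cast this
    push_cast
    field_simp
    linarith
  subst hv
  have : (u : ℝ) = u' := by
    field_simp at h
    linarith
  exact ⟨by exact_mod_cast this, rfl⟩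

theorem psi_inj : Function.Injective ψ := by
  intro p q h
  unfold ψ at h
  have h := QuaternionAlgebra.mk.inj h
  obtain ⟨e1, e2, e3, e4⟩ := h
  obtain ⟨g1, g2⟩ := ev_inj e1
  obtain ⟨g3, g4⟩ := ev_inj e2
  obtain ⟨g5, g6⟩ := ev_inj e3
  obtain ⟨g7, g8⟩ := ev_inj e4
  cases p; cases q; simp_all

theorem hinv : rawmul qx (qconj qx) = scale4 qone ∧ rawmul (qconj qx) qx = scale4 qone ∧
    rawmul qy (qconj qy) = scale4 qone ∧ rawmul (qconj qy) qy = scale4 qone := by decide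

def ux : (ℍ[ℝ])ˣ := ⟨ψ qx, ψ (qconj qx), by rw [← psi_mul hinv.1, psi_one], by rw [← psi_mul hinv.2.1, psi_one]⟩
def uy : (ℍ[ℝ])ˣ := ⟨ψ qy, ψ (qconj qy), by rw [← psi_mul hinv.2.2.1, psi_one], by rw [← psi_mul hinv.2.2.2, psi_one]⟩

theorem hux : ux ∈ G2I := Subgroup.subset_closure (Or.inl psi_x)
theorem huy : uy ∈ G2I := Subgroup.subset_closure (Or.inr psi_y)

theorem dir1 : ∀ i, i < 120 → ∃ u : (ℍ[ℝ])ˣ, u ∈ G2I ∧ (u : ℍ[ℝ]) = ψ (nth i) := by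
  intro i
  induction i using Nat.strong_induction_on with
  | _ i IH =>
    intro hi
    rcases hok i hi with (h | h | h) | ⟨hj, hk, he⟩
    · exact ⟨1, one_mem _, by rw [h, psi_one]; rfl⟩
    · exact ⟨ux, hux, by rw [h]; rfl⟩
    · exact ⟨uy, huy, by rw [h]; rfl⟩
    · obtain ⟨u, hu, hval⟩ := IH (pj i) hj (hj.trans hi)
      obtain ⟨v, hv, hval'⟩ := IH (pk i) hk (hk.trans hi)
      exact ⟨u * v, mul_mem hu hv, by rw [Units.val_mul, hval, hval', ← psi_mul he]⟩

theorem memL : ∀ p, p ∈ L ↔ ∃ i, i < 120 ∧ nth i = p := by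
  intro p
  simp [L, List.mem_map, List.mem_range]

theorem dir2 : ∀ u : (ℍ[ℝ])ˣ, u ∈ G2I → ∃ p ∈ L, ψ p = (u : ℍ[ℝ]) := by
  intro u hu
  have hu' : u ∈ Submonoid.closure
      ({w : (ℍ[ℝ])ˣ | (w : ℍ[ℝ]) = a₁ * a₂ ∨ (w : ℍ[ℝ]) = a₂ * a₃} ∪
       {w : (ℍ[ℝ])ˣ | (w : ℍ[ℝ]) = a₁ * a₂ ∨ (w : ℍ[ℝ]) = a₂ * a₃}⁻¹) := by
    rw [← Subgroup.closure_toSubmonoid]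
    exact hu
  obtain ⟨l, hl, hprod⟩ := Submonoid.exists_list_of_mem_closure hu'
  subst hprod
  clear hu hu'
  induction l using List.reverseRecOn with
  | nil =>
    refine ⟨qone, (memL qone).2 ⟨0, by norm_num, rfl⟩, ?_⟩
    rw [psi_one]; rfl
  | append_singleton l g IH =>
    obtain ⟨p, hp, hψ⟩ := IH (fun y hy => hl y (by simp [hy]))
    have hg := hl g (by simp)
    have hg4 : (g : ℍ[ℝ]) = ψ qx ∨ (g : ℍ[ℝ]) = ψ qy ∨
        (g : ℍ[ℝ]) = ψ (qconj qx) ∨ (g : ℍ[ℝ]) = ψ (qconj qy) := by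
      rcases hg with (h | h) | hg
      · exact Or.inl (h.trans psi_x.symm)
      · exact Or.inr (Or.inl (h.trans psi_y.symm))
      · rw [Set.mem_inv] at hg
        rcases hg with h | h
        · refine Or.inr (Or.inr (Or.inl ?_))
          have h1 : ((g⁻¹ : (ℍ[ℝ])ˣ) : ℍ[ℝ]) = ψ qx := h.trans psi_x.symm
          have h2 : (g : ℍ[ℝ]) * ψ qx = 1 := by rw [← h1]; exact g.mul_inv
          calc (g : ℍ[ℝ]) = (g : ℍ[ℝ]) * (ψ qx * ψ (qconj qx)) := by
                rw [← psi_mul hinv.1, psi_one, mul_one]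
            _ = ((g : ℍ[ℝ]) * ψ qx) * ψ (qconj qx) := by rw [mul_assoc]
            _ = ψ (qconj qx) := by rw [h2, one_mul]
        · refine Or.inr (Or.inr (Or.inr ?_))
          have h1 : ((g⁻¹ : (ℍ[ℝ])ˣ) : ℍ[ℝ]) = ψ qy := h.trans psi_y.symm
          have h2 : (g : ℍ[ℝ]) * ψ qy = 1 := by rw [← h1]; exact g.mul_inv
          calc (g : ℍ[ℝ]) = (g : ℍ[ℝ]) * (ψ qy * ψ (qconj qy)) := by
                rw [← psi_mul hinv.2.2.1, psi_one, mul_one]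
            _ = ((g : ℍ[ℝ]) * ψ qy) * ψ (qconj qy) := by rw [mul_assoc]
            _ = ψ (qconj qy) := by rw [h2, one_mul]
    have key : ∀ g' : Q, (g : ℍ[ℝ]) = ψ g' → g' ∈ [qx, qy, qconj qx, qconj qy] →
        ∃ c ∈ L, ψ c = ((l ++ [g]).prod : ℍ[ℝ]) := by
      intro g' hgval hmem
      obtain ⟨c, hc, he⟩ := hclosure p hp g' hmem
      refine ⟨c, hc, ?_⟩
      rw [List.prod_append, List.prod_singleton, Units.val_mul, ← hψ, hgval]; exact psi_mul he
    rcases hg4 with h | h | h | h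
    · exact key qx h (by simp)
    · exact key qy h (by simp)
    · exact key (qconj qx) h (by simp)
    · exact key (qconj qy) h (by simp)

/-- The binary icosahedral group `2I`, the subgroup of `ℍˣ` generated by the spinors
`a₁a₂` and `a₂a₃`, has exactly 120 elements. -/
theorem card_binary_icosahedral : Nat.card G2I = 120 := by
  classical
  set f : G2I → ℍ[ℝ] := fun u => ((u : (ℍ[ℝ])ˣ) : ℍ[ℝ]) with hf
  have hinjf : Function.Injective f := by
    intro a b h
    exact Subtype.ext (Units.ext h)
  have hrange : Set.range f = ψ '' {p | p ∈ L} := by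
    ext h
    constructor
    · rintro ⟨⟨u, hu⟩, rfl⟩
      obtain ⟨p, hp, hψ⟩ := dir2 u hu
      exact ⟨p, hp, hψ⟩
    · rintro ⟨p, hp, rfl⟩
      obtain ⟨i, hi, rfl⟩ := (memL p).1 hp
      obtain ⟨u, hu, hval⟩ := dir1 i hi
      exact ⟨⟨u, hu⟩, hval⟩
  have h1 : Nat.card G2I = Nat.card (Set.range f) :=
    Nat.card_congr (Equiv.ofInjective f hinjf)
  rw [h1, Nat.card_coe_set_eq, hrange]
  have hset : {p : Q | p ∈ L} = (L.toFinset : Set Q) := by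
    ext p; simp
  rw [hset, Set.ncard_image_of_injective _ psi_inj, Set.ncard_coe_finset,
    List.toFinset_card_of_nodup hnodup]
  simp [L]
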